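/- If w is a counterexample of minimal length for regular expressions p and q over an alphabet Σ (i.e., w is a counterexample and no counterexample for p and q is strictly shorter), then w is an irreducible counterexample. -/
import Mathlib


open RegularExpression

variable {α : Type*}

/-- The derivative of a regular expression with respect to a string,
folding the Brzozowski character derivative over the string. -/
def derivs [DecidableEq α] (p : RegularExpression α) (w : List α) : RegularExpression α :=
  w.foldl RegularExpression.deriv p

/-- `w` is a counterexample for `p` and `q` if exactly one of them accepts `w`. -/
def Counterexample (p q : RegularExpression α) (w : List α) : Prop :=
  Xor' (w ∈ p.matches') (w ∈ q.matches')

/-- A string `w` is reducible (for `p` and `q`) if `w = s ++ t ++ u` with `t` nonempty,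
`L(δ_s p) = L(δ_{s++t} p)` and `L(δ_s q) = L(δ_{s++t} q)`. -/
def Reducible [DecidableEq α] (p q : RegularExpression α) (w : List α) : Prop :=
  ∃ s t u : List α, w = s ++ t ++ u ∧ t ≠ [] ∧
    (derivs p s).matches' = (derivs p (s ++ t)).matches' ∧
    (derivs q s).matches' = (derivs q (s ++ t)).matches'

/-- `Sync s p q` : `p` and `q` have no irreducible counterexample having `s` as a prefix. -/
def Sync [DecidableEq α] (s : List α) (p q : RegularExpression α) : Prop :=
  ∀ w : List α, s <+: w → Counterexample p q w → Reducible p q w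


lemma deriv_matches'_mem [DecidableEq α] (p : RegularExpression α) (a : α) (x : List α) :
    x ∈ (p.deriv a).matches' ↔ (a :: x) ∈ p.matches' := by
  rw [← rmatch_iff_matches', ← rmatch_iff_matches']
  rfl

lemma derivs_matches'_mem [DecidableEq α] (p : RegularExpression α) (s x : List α) :
    x ∈ (derivs p s).matches' ↔ (s ++ x) ∈ p.matches' := by
  induction s generalizing p with
  | nil => rfl
  | cons a s ih =>
    simp only [derivs, List.foldl_cons] at *
    rw [ih, deriv_matches'_mem]
    rfl

theorem minimal_counterexample_irreducible [DecidableEq α] (p q : RegularExpression α)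
    (w : List α) (hce : Counterexample p q w)
    (hmin : ∀ w' : List α, Counterexample p q w' → w.length ≤ w'.length) :
    Counterexample p q w ∧ ¬ Reducible p q w := by
  refine ⟨hce, fun hred => ?_⟩
  obtain ⟨s, t, u, hw, ht, hp, hq⟩ := hred
  have hp' : (s ++ u) ∈ p.matches' ↔ w ∈ p.matches' := by
    rw [hw, ← derivs_matches'_mem, ← derivs_matches'_mem, hp]
  have hq' : (s ++ u) ∈ q.matches' ↔ w ∈ q.matches' := by
    rw [hw, ← derivs_matches'_mem, ← derivs_matches'_mem, hq]
  have hce' : Counterexample p q (s ++ u) := by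
    unfold Counterexample at *
    rw [hp', hq']; exact hce
  have := hmin _ hce'
  rw [hw] at this
  simp only [List.length_append] at this
  have : t.length = 0 := by omega
  exact ht (List.length_eq_zero_iff.mp this)
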